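/- Let ℓ > 0 and let h : ℝ → ℝ be measurable with |h(x)| ≤ ℓ e^{x} (1+|x|³) for x < 0 and |h(x)| ≤ ℓ e^{−5x/2} (1+|x|³) for x ≥ 0. Let −5/2 < A < 1 and −5/2 < B < 1, let N > 0, and let f₀ be measurable with |f₀(x)| ≤ N e^{Ax} for x < 0 and |f₀(x)| ≤ N e^{Bx} for x ≥ 0. Then the convolution (h∗f₀)(x) = ∫_ℝ h(x−y) f₀(y) dy is absolutely convergent for every x ∈ ℝ, and there exists C = C(A,B) > 0 such that |(h∗f₀)(x)| ≤ C ℓ N e^{Ax} for all x < 0 and |(h∗f₀)(x)| ≤ C ℓ N e^{Bx} for all x ≥ 0. -/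

import Mathlib

open MeasureTheory

open Set Real Filter Topology



lemma aux_cube {δ : ℝ} (hδ : 0 < δ) {t : ℝ} (ht : 0 ≤ t) :
    1 + t ^ 3 ≤ (1 + 6 / δ ^ 3) * Real.exp (δ * t) := by
  have hx : (0:ℝ) ≤ δ * t := by positivity
  have h1 : (1:ℝ) ≤ Real.exp (δ * t) := Real.one_le_exp hx
  have h2 := Real.sum_le_exp_of_nonneg hx 4
  simp [Finset.sum_range_succ, Nat.factorial] at h2
  have h3 : (δ * t) ^ 3 / 6 ≤ Real.exp (δ * t) := by nlinarith [sq_nonneg (δ * t)]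
  have hδ3 : (0:ℝ) < δ ^ 3 := by positivity
  have h4 : t ^ 3 ≤ 6 / δ ^ 3 * Real.exp (δ * t) := by
    rw [div_mul_eq_mul_div, le_div_iff₀ hδ3]
    calc t ^ 3 * δ ^ 3 = 6 * ((δ * t) ^ 3 / 6) := by ring
    _ ≤ 6 * Real.exp (δ * t) := by linarith
  nlinarith

lemma aux_intOn_Ioi {k : ℝ} (hk : k < 0) (c : ℝ) :
    IntegrableOn (fun y => Real.exp (k * y)) (Ioi c) := by
  have := exp_neg_integrableOn_Ioi c (b := -k) (by linarith)
  simpa using this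

lemma aux_val_Ioi {k : ℝ} (hk : k < 0) (c : ℝ) :
    ∫ y in Ioi c, Real.exp (k * y) = Real.exp (k * c) / (-k) := by
  have hk' : (0:ℝ) < -k := by linarith
  have h1 : ∀ y : ℝ, Real.exp (k * y) = (fun u => Real.exp (-u)) (-k * y) := by
    intro y; simp
  calc ∫ y in Ioi c, Real.exp (k * y) = ∫ y in Ioi c, (fun u => Real.exp (-u)) (-k * y) := by
        simp_rw [← h1]
  _ = (-k)⁻¹ • ∫ u in Ioi (-k * c), Real.exp (-u) :=
        integral_comp_mul_left_Ioi (fun u => Real.exp (-u)) c hk'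
  _ = Real.exp (k * c) / (-k) := by
        rw [integral_exp_neg_Ioi, smul_eq_mul]
        field_simp

lemma aux_interval {k : ℝ} (hk : k ≠ 0) (y c : ℝ) :
    ∫ x in y..c, Real.exp (k * x) = (Real.exp (k * c) - Real.exp (k * y)) / k := by
  have := intervalIntegral.integral_comp_mul_left (a := y) (b := c) Real.exp hk
  rw [this, integral_exp, smul_eq_mul]
  field_simp

lemma aux_intOn_Iic {k : ℝ} (hk : 0 < k) (c : ℝ) :
    IntegrableOn (fun y => Real.exp (k * y)) (Iic c) := by
  refine integrableOn_Iic_of_intervalIntegral_norm_bounded (Real.exp (k * c) / k) c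
    (fun y => (Real.continuous_exp.comp (continuous_const.mul continuous_id)).integrableOn_Ioc)
    tendsto_id (Eventually.of_forall fun y => ?_)
  have : (fun x => ‖Real.exp (k * x)‖) = fun x => Real.exp (k * x) := by
    funext x; exact norm_of_nonneg (Real.exp_pos _).le
  rw [this, show (id y : ℝ) = y from rfl, aux_interval hk.ne' y c]
  have := (Real.exp_pos (k * y)).le
  rw [div_le_div_iff₀ hk hk]
  nlinarith

lemma aux_val_Iic {k : ℝ} (hk : 0 < k) (c : ℝ) :
    ∫ y in Iic c, Real.exp (k * y) = Real.exp (k * c) / k := by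
  refine tendsto_nhds_unique
    (intervalIntegral_tendsto_integral_Iic c (aux_intOn_Iic hk c) tendsto_id) ?_
  simp_rw [aux_interval hk.ne']
  have h1 : Tendsto (fun y : ℝ => Real.exp (k * y)) atBot (𝓝 0) :=
    Real.tendsto_exp_atBot.comp (Tendsto.const_mul_atBot hk tendsto_id)
  have h2 : Tendsto (fun y : ℝ => (Real.exp (k * c) - Real.exp (k * y)) / k) atBot
      (𝓝 ((Real.exp (k * c) - 0) / k)) :=
    (Tendsto.sub tendsto_const_nhds h1).div_const k
  simpa using h2

noncomputable def mexp (p q : ℝ) : ℝ → ℝ := fun u => if u < 0 then Real.exp (p * u) else Real.exp (q * u)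

lemma mexp_pos (p q u : ℝ) : 0 < mexp p q u := by
  unfold mexp; split <;> exact Real.exp_pos _

lemma mexp_meas (p q : ℝ) : Measurable (mexp p q) := by
  unfold mexp
  exact Measurable.ite measurableSet_Iio (by fun_prop) (by fun_prop)

lemma mexp_of_nonneg (p q : ℝ) {u : ℝ} (hu : 0 ≤ u) : mexp p q u = Real.exp (q * u) :=
  if_neg (not_lt.mpr hu)

lemma mexp_of_nonpos (p q : ℝ) {u : ℝ} (hu : u ≤ 0) : mexp p q u = Real.exp (p * u) := by
  rcases lt_or_eq_of_le hu with h | h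
  · exact if_pos h
  · subst h; simp [mexp]

lemma mexp_le (p q u : ℝ) : mexp p q u ≤ Real.exp (p * u) + Real.exp (q * u) := by
  unfold mexp; split
  · linarith [(Real.exp_pos (q * u)).le]
  · linarith [(Real.exp_pos (p * u)).le]

lemma conv_key {a b A B : ℝ} (hbA : b < A) (hbB : b < B) (hAa : A < a) (hBa : B < a) (x : ℝ) :
    Integrable (fun y => mexp a b (x - y) * mexp A B y) ∧
    ∫ y, mexp a b (x - y) * mexp A B y ≤
      (1 / (A - b) + 1 / (a - A) + 1 / (a - B) + 1 / (B - b)) * mexp A B x := by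
  set G : ℝ → ℝ := fun y => mexp a b (x - y) * mexp A B y with hGdef
  have hGmeas : Measurable G :=
    ((mexp_meas a b).comp (measurable_const.sub measurable_id)).mul (mexp_meas A B)
  have hGnn : ∀ y, 0 ≤ G y := fun y => (mul_pos (mexp_pos _ _ _) (mexp_pos _ _ _)).le
  have hAb : (0:ℝ) < A - b := by linarith
  have hBb : (0:ℝ) < B - b := by linarith
  have haA : A - a < 0 := by linarith
  have haB : B - a < 0 := by linarith
  -- integrability on Iic x
  have hIic : IntegrableOn G (Iic x) := by
    have hdom : Integrable
        (fun y => Real.exp (b * x) * (Real.exp ((A - b) * y) + Real.exp ((B - b) * y)))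
        (volume.restrict (Iic x)) :=
      (((aux_intOn_Iic hAb x).add (aux_intOn_Iic hBb x)).const_mul _)
    refine hdom.mono' hGmeas.aestronglyMeasurable.restrict ?_
    refine (ae_restrict_iff' measurableSet_Iic).mpr (Filter.Eventually.of_forall fun y hy => ?_)
    rw [Real.norm_eq_abs, abs_of_nonneg (hGnn y)]
    have h1 : mexp a b (x - y) = Real.exp (b * (x - y)) :=
      mexp_of_nonneg _ _ (by simp only [mem_Iic] at hy; linarith)
    calc G y = Real.exp (b * (x - y)) * mexp A B y := by rw [hGdef]; simp only; rw [h1]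
    _ ≤ Real.exp (b * (x - y)) * (Real.exp (A * y) + Real.exp (B * y)) :=
        mul_le_mul_of_nonneg_left (mexp_le _ _ _) (Real.exp_pos _).le
    _ = Real.exp (b * x) * (Real.exp ((A - b) * y) + Real.exp ((B - b) * y)) := by
        rw [mul_add, mul_add, ← Real.exp_add, ← Real.exp_add, ← Real.exp_add, ← Real.exp_add]
        congr 1 <;> (rw [Real.exp_eq_exp]; ring)
  -- integrability on Ioi x
  have hIoi : IntegrableOn G (Ioi x) := by
    have hdom : Integrable
        (fun y => Real.exp (a * x) * (Real.exp ((A - a) * y) + Real.exp ((B - a) * y)))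
        (volume.restrict (Ioi x)) :=
      (((aux_intOn_Ioi haA x).add (aux_intOn_Ioi haB x)).const_mul _)
    refine hdom.mono' hGmeas.aestronglyMeasurable.restrict ?_
    refine (ae_restrict_iff' measurableSet_Ioi).mpr (Filter.Eventually.of_forall fun y hy => ?_)
    rw [Real.norm_eq_abs, abs_of_nonneg (hGnn y)]
    have h1 : mexp a b (x - y) = Real.exp (a * (x - y)) :=
      mexp_of_nonpos _ _ (by simp only [mem_Ioi] at hy; linarith)
    calc G y = Real.exp (a * (x - y)) * mexp A B y := by rw [hGdef]; simp only; rw [h1]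
    _ ≤ Real.exp (a * (x - y)) * (Real.exp (A * y) + Real.exp (B * y)) :=
        mul_le_mul_of_nonneg_left (mexp_le _ _ _) (Real.exp_pos _).le
    _ = Real.exp (a * x) * (Real.exp ((A - a) * y) + Real.exp ((B - a) * y)) := by
        rw [mul_add, mul_add, ← Real.exp_add, ← Real.exp_add, ← Real.exp_add, ← Real.exp_add]
        congr 1 <;> (rw [Real.exp_eq_exp]; ring)
  have hG : Integrable G := by
    rw [← integrableOn_univ, ← Set.Iic_union_Ioi (a := x)]
    exact hIic.union hIoi
  refine ⟨hG, ?_⟩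
  have hsplit : ∫ y, G y = (∫ y in Iic x, G y) + ∫ y in Ioi x, G y :=
    (intervalIntegral.integral_Iic_add_Ioi hIic hIoi).symm
  rcases lt_or_ge x 0 with hx | hx
  · -- x < 0
    have hmx : mexp A B x = Real.exp (A * x) := mexp_of_nonpos _ _ hx.le
    -- left piece: exact value
    have e1 : ∫ y in Iic x, G y = Real.exp (A * x) / (A - b) := by
      rw [setIntegral_congr_fun measurableSet_Iic
        (g := fun y => Real.exp (b * x) * Real.exp ((A - b) * y)) ?_]
      · rw [integral_const_mul, aux_val_Iic hAb x, ← mul_div_assoc, ← Real.exp_add]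
        ring_nf
      · intro y hy
        simp only [mem_Iic] at hy
        rw [hGdef]; simp only
        rw [mexp_of_nonneg _ _ (by linarith : (0:ℝ) ≤ x - y),
          mexp_of_nonpos _ _ (by linarith : y ≤ 0), ← Real.exp_add, ← Real.exp_add]
        ring_nf
    -- split right piece at 0
    have hunion : Ioc x 0 ∪ Ioi (0:ℝ) = Ioi x := Ioc_union_Ioi_eq_Ioi hx.le
    have hdecomp : ∫ y in Ioi x, G y = (∫ y in Ioc x 0, G y) + ∫ y in Ioi 0, G y := by
      rw [← setIntegral_union (Ioc_disjoint_Ioi le_rfl) measurableSet_Ioi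
        (hIoi.mono_set Ioc_subset_Ioi_self)
        (hIoi.mono_set (Ioi_subset_Ioi hx.le)), hunion]
    have b1 : ∫ y in Ioc x 0, G y ≤ Real.exp (A * x) / (a - A) := by
      have hcong : ∫ y in Ioc x 0, G y
          = ∫ y in Ioc x 0, Real.exp (a * x) * Real.exp ((A - a) * y) := by
        refine setIntegral_congr_fun measurableSet_Ioc fun y hy => ?_
        obtain ⟨hy1, hy2⟩ := hy
        rw [hGdef]; simp only
        rw [mexp_of_nonpos _ _ (by linarith : x - y ≤ 0),
          mexp_of_nonpos _ _ hy2, ← Real.exp_add, ← Real.exp_add]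
        ring_nf
      rw [hcong]
      have hint : IntegrableOn (fun y => Real.exp (a * x) * Real.exp ((A - a) * y)) (Ioi x) :=
        (aux_intOn_Ioi haA x).const_mul _
      calc ∫ y in Ioc x 0, Real.exp (a * x) * Real.exp ((A - a) * y)
          ≤ ∫ y in Ioi x, Real.exp (a * x) * Real.exp ((A - a) * y) :=
            setIntegral_mono_set hint
              (Filter.Eventually.of_forall fun y => by dsimp only; positivity)
              (HasSubset.Subset.eventuallyLE Ioc_subset_Ioi_self)
      _ = Real.exp (A * x) / (a - A) := by
            rw [integral_const_mul, aux_val_Ioi haA x, neg_sub, ← mul_div_assoc, ← Real.exp_add]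
            ring_nf
    have b2 : ∫ y in Ioi 0, G y ≤ Real.exp (A * x) / (a - B) := by
      have hcong : ∫ y in Ioi (0:ℝ), G y
          = ∫ y in Ioi (0:ℝ), Real.exp (a * x) * Real.exp ((B - a) * y) := by
        refine setIntegral_congr_fun measurableSet_Ioi fun y hy => ?_
        simp only [mem_Ioi] at hy
        rw [hGdef]; simp only
        rw [mexp_of_nonpos _ _ (by linarith : x - y ≤ 0),
          mexp_of_nonneg _ _ hy.le, ← Real.exp_add, ← Real.exp_add]
        ring_nf
      rw [hcong, integral_const_mul, aux_val_Ioi haB 0, mul_zero, Real.exp_zero, neg_sub]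
      have hax : Real.exp (a * x) ≤ Real.exp (A * x) :=
        Real.exp_le_exp.mpr (mul_le_mul_of_nonpos_right hAa.le hx.le)
      calc Real.exp (a * x) * (1 / (a - B)) ≤ Real.exp (A * x) * (1 / (a - B)) := by
            exact mul_le_mul_of_nonneg_right hax (one_div_nonneg.mpr (by linarith))
      _ = Real.exp (A * x) / (a - B) := by ring
    have hpos := (Real.exp_pos (A * x))
    rw [hsplit, e1, hdecomp, hmx]
    have h4 : 0 < Real.exp (A * x) / (B - b) := div_pos hpos hBb
    have key : (1 / (A - b) + 1 / (a - A) + 1 / (a - B) + 1 / (B - b)) * Real.exp (A * x)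
        = Real.exp (A * x) / (A - b) + Real.exp (A * x) / (a - A) + Real.exp (A * x) / (a - B)
          + Real.exp (A * x) / (B - b) := by
      rw [add_mul, add_mul, add_mul, one_div_mul_eq_div, one_div_mul_eq_div,
        one_div_mul_eq_div, one_div_mul_eq_div]
    rw [key]; linarith
  · -- 0 ≤ x
    have hmx : mexp A B x = Real.exp (B * x) := mexp_of_nonneg _ _ hx
    have e1 : ∫ y in Ioi x, G y = Real.exp (B * x) / (a - B) := by
      rw [setIntegral_congr_fun measurableSet_Ioi
        (g := fun y => Real.exp (a * x) * Real.exp ((B - a) * y)) ?_]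
      · rw [integral_const_mul, aux_val_Ioi haB x, neg_sub, ← mul_div_assoc, ← Real.exp_add]
        ring_nf
      · intro y hy
        simp only [mem_Ioi] at hy
        rw [hGdef]; simp only
        rw [mexp_of_nonpos _ _ (by linarith : x - y ≤ 0),
          mexp_of_nonneg _ _ (by linarith : (0:ℝ) ≤ y), ← Real.exp_add, ← Real.exp_add]
        ring_nf
    have hunion : Iic (0:ℝ) ∪ Ioc 0 x = Iic x := Iic_union_Ioc_eq_Iic hx
    have hdecomp : ∫ y in Iic x, G y = (∫ y in Iic 0, G y) + ∫ y in Ioc 0 x, G y := by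
      rw [← setIntegral_union (Iic_disjoint_Ioc le_rfl) measurableSet_Ioc
        (hIic.mono_set (Iic_subset_Iic.mpr hx))
        (hIic.mono_set Ioc_subset_Iic_self), hunion]
    have b1 : ∫ y in Iic 0, G y ≤ Real.exp (B * x) / (A - b) := by
      have hcong : ∫ y in Iic (0:ℝ), G y
          = ∫ y in Iic (0:ℝ), Real.exp (b * x) * Real.exp ((A - b) * y) := by
        refine setIntegral_congr_fun measurableSet_Iic fun y hy => ?_
        simp only [mem_Iic] at hy
        rw [hGdef]; simp only
        rw [mexp_of_nonneg _ _ (by linarith : (0:ℝ) ≤ x - y),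
          mexp_of_nonpos _ _ hy, ← Real.exp_add, ← Real.exp_add]
        ring_nf
      rw [hcong, integral_const_mul, aux_val_Iic hAb 0, mul_zero, Real.exp_zero]
      have hbx : Real.exp (b * x) ≤ Real.exp (B * x) :=
        Real.exp_le_exp.mpr (mul_le_mul_of_nonneg_right hbB.le hx)
      calc Real.exp (b * x) * (1 / (A - b)) ≤ Real.exp (B * x) * (1 / (A - b)) := by
            exact mul_le_mul_of_nonneg_right hbx (one_div_nonneg.mpr (by linarith))
      _ = Real.exp (B * x) / (A - b) := by ring
    have b2 : ∫ y in Ioc 0 x, G y ≤ Real.exp (B * x) / (B - b) := by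
      have hcong : ∫ y in Ioc (0:ℝ) x, G y
          = ∫ y in Ioc (0:ℝ) x, Real.exp (b * x) * Real.exp ((B - b) * y) := by
        refine setIntegral_congr_fun measurableSet_Ioc fun y hy => ?_
        obtain ⟨hy1, hy2⟩ := hy
        rw [hGdef]; simp only
        rw [mexp_of_nonneg _ _ (by linarith : (0:ℝ) ≤ x - y),
          mexp_of_nonneg _ _ hy1.le, ← Real.exp_add, ← Real.exp_add]
        ring_nf
      rw [hcong]
      have hint : IntegrableOn (fun y => Real.exp (b * x) * Real.exp ((B - b) * y)) (Iic x) :=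
        (aux_intOn_Iic hBb x).const_mul _
      calc ∫ y in Ioc 0 x, Real.exp (b * x) * Real.exp ((B - b) * y)
          ≤ ∫ y in Iic x, Real.exp (b * x) * Real.exp ((B - b) * y) :=
            setIntegral_mono_set hint
              (Filter.Eventually.of_forall fun y => by dsimp only; positivity)
              (HasSubset.Subset.eventuallyLE Ioc_subset_Iic_self)
      _ = Real.exp (B * x) / (B - b) := by
            rw [integral_const_mul, aux_val_Iic hBb x, ← mul_div_assoc, ← Real.exp_add]
            ring_nf
    have hpos := (Real.exp_pos (B * x))
    rw [hsplit, e1, hdecomp, hmx]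
    have h4 : 0 < Real.exp (B * x) / (a - A) := div_pos hpos (by linarith)
    have key : (1 / (A - b) + 1 / (a - A) + 1 / (a - B) + 1 / (B - b)) * Real.exp (B * x)
        = Real.exp (B * x) / (A - b) + Real.exp (B * x) / (a - A) + Real.exp (B * x) / (a - B)
          + Real.exp (B * x) / (B - b) := by
      rw [add_mul, add_mul, add_mul, one_div_mul_eq_div, one_div_mul_eq_div,
        one_div_mul_eq_div, one_div_mul_eq_div]
    rw [key]; linarith

theorem stmt16 (A B : ℝ) (hA1 : -5/2 < A) (hA2 : A < 1) (hB1 : -5/2 < B) (hB2 : B < 1) :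
    ∃ C : ℝ, 0 < C ∧ ∀ ℓ : ℝ, 0 < ℓ → ∀ h : ℝ → ℝ, Measurable h →
      (∀ x : ℝ, x < 0 → |h x| ≤ ℓ * Real.exp x * (1 + |x| ^ 3)) →
      (∀ x : ℝ, 0 ≤ x → |h x| ≤ ℓ * Real.exp (-(5 * x) / 2) * (1 + |x| ^ 3)) →
      ∀ N : ℝ, 0 < N → ∀ f₀ : ℝ → ℝ, Measurable f₀ →
      (∀ x : ℝ, x < 0 → |f₀ x| ≤ N * Real.exp (A * x)) →
      (∀ x : ℝ, 0 ≤ x → |f₀ x| ≤ N * Real.exp (B * x)) →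
      -- the convolution is absolutely convergent for every `x`
      (∀ x : ℝ, Integrable (fun y => h (x - y) * f₀ y)) ∧
      (∀ x : ℝ, x < 0 → |∫ y, h (x - y) * f₀ y| ≤ C * ℓ * N * Real.exp (A * x)) ∧
      (∀ x : ℝ, 0 ≤ x → |∫ y, h (x - y) * f₀ y| ≤ C * ℓ * N * Real.exp (B * x)) := by
  set a : ℝ := (max A B + 1) / 2 with ha_def
  set b : ℝ := (min A B - 5/2) / 2 with hb_def
  have hAa : A < a := by have := le_max_left A B; rw [ha_def]; linarith
  have hBa : B < a := by have := le_max_right A B; rw [ha_def]; linarith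
  have ha1 : a < 1 := by have := max_lt hA2 hB2; rw [ha_def]; linarith
  have hbA : b < A := by have := min_le_left A B; rw [hb_def]; linarith
  have hbB : b < B := by have := min_le_right A B; rw [hb_def]; linarith
  have hb52 : -5/2 < b := by have := lt_min hA1 hB1; rw [hb_def]; linarith
  have h1a : (0:ℝ) < 1 - a := by linarith
  have h52b : (0:ℝ) < 5/2 + b := by linarith
  set C₀ : ℝ := (1 + 6 / (1 - a) ^ 3) + (1 + 6 / (5/2 + b) ^ 3) with hC₀_def
  have hC₀1 : 1 + 6 / (1 - a) ^ 3 ≤ C₀ := by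
    rw [hC₀_def]
    have : (0:ℝ) < 1 + 6 / (5/2 + b) ^ 3 := by positivity
    linarith
  have hC₀2 : 1 + 6 / (5/2 + b) ^ 3 ≤ C₀ := by
    rw [hC₀_def]
    have : (0:ℝ) < 1 + 6 / (1 - a) ^ 3 := by positivity
    linarith
  have hC₀pos : 0 < C₀ := by rw [hC₀_def]; positivity
  set C₁ : ℝ := 1 / (A - b) + 1 / (a - A) + 1 / (a - B) + 1 / (B - b) with hC₁_def
  have hC₁pos : 0 < C₁ := by
    rw [hC₁_def]
    have t1 : (0:ℝ) < 1 / (A - b) := one_div_pos.mpr (by linarith)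
    have t2 : (0:ℝ) < 1 / (a - A) := one_div_pos.mpr (by linarith)
    have t3 : (0:ℝ) < 1 / (a - B) := one_div_pos.mpr (by linarith)
    have t4 : (0:ℝ) < 1 / (B - b) := one_div_pos.mpr (by linarith)
    linarith
  refine ⟨C₀ * C₁, mul_pos hC₀pos hC₁pos, ?_⟩
  intro ℓ hℓ h hmeas hneg hpos N hN f₀ hf₀meas hf₀neg hf₀pos
  -- pointwise bound for h
  have hh : ∀ u : ℝ, |h u| ≤ ℓ * C₀ * mexp a b u := by
    intro u
    rcases lt_or_ge u 0 with hu | hu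
    · have h0 := hneg u hu
      have habs : |u| = -u := abs_of_neg hu
      have hcube := aux_cube h1a (t := -u) (by linarith)
      have key : Real.exp u * (1 + (-u) ^ 3) ≤ (1 + 6 / (1 - a) ^ 3) * Real.exp (a * u) := by
        have := mul_le_mul_of_nonneg_left hcube (Real.exp_pos u).le
        calc Real.exp u * (1 + (-u) ^ 3)
            ≤ Real.exp u * ((1 + 6 / (1 - a) ^ 3) * Real.exp ((1 - a) * -u)) := this
        _ = (1 + 6 / (1 - a) ^ 3) * Real.exp (a * u) := by
            rw [mul_comm (Real.exp u), mul_assoc, ← Real.exp_add]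
            congr 2
            ring
      rw [mexp_of_nonpos _ _ hu.le]
      calc |h u| ≤ ℓ * Real.exp u * (1 + |u| ^ 3) := h0
      _ = ℓ * (Real.exp u * (1 + (-u) ^ 3)) := by rw [habs]; ring
      _ ≤ ℓ * ((1 + 6 / (1 - a) ^ 3) * Real.exp (a * u)) :=
          mul_le_mul_of_nonneg_left key hℓ.le
      _ ≤ ℓ * (C₀ * Real.exp (a * u)) := by
          apply mul_le_mul_of_nonneg_left _ hℓ.le
          exact mul_le_mul_of_nonneg_right hC₀1 (Real.exp_pos _).le
      _ = ℓ * C₀ * Real.exp (a * u) := by ring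
    · have h0 := hpos u hu
      have habs : |u| = u := abs_of_nonneg hu
      have hcube := aux_cube h52b (t := u) hu
      have key : Real.exp (-(5 * u) / 2) * (1 + u ^ 3)
          ≤ (1 + 6 / (5/2 + b) ^ 3) * Real.exp (b * u) := by
        have := mul_le_mul_of_nonneg_left hcube (Real.exp_pos (-(5 * u) / 2)).le
        calc Real.exp (-(5 * u) / 2) * (1 + u ^ 3)
            ≤ Real.exp (-(5 * u) / 2) * ((1 + 6 / (5/2 + b) ^ 3) * Real.exp ((5/2 + b) * u)) :=
              this
        _ = (1 + 6 / (5/2 + b) ^ 3) * Real.exp (b * u) := by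
            rw [mul_comm (Real.exp (-(5 * u) / 2)), mul_assoc, ← Real.exp_add]
            congr 2
            ring
      rw [mexp_of_nonneg _ _ hu]
      calc |h u| ≤ ℓ * Real.exp (-(5 * u) / 2) * (1 + |u| ^ 3) := h0
      _ = ℓ * (Real.exp (-(5 * u) / 2) * (1 + u ^ 3)) := by rw [habs]; ring
      _ ≤ ℓ * ((1 + 6 / (5/2 + b) ^ 3) * Real.exp (b * u)) :=
          mul_le_mul_of_nonneg_left key hℓ.le
      _ ≤ ℓ * (C₀ * Real.exp (b * u)) := by
          apply mul_le_mul_of_nonneg_left _ hℓ.le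
          exact mul_le_mul_of_nonneg_right hC₀2 (Real.exp_pos _).le
      _ = ℓ * C₀ * Real.exp (b * u) := by ring
  -- pointwise bound for f₀
  have hf : ∀ y : ℝ, |f₀ y| ≤ N * mexp A B y := by
    intro y
    rcases lt_or_ge y 0 with hy | hy
    · rw [mexp_of_nonpos _ _ hy.le]; exact hf₀neg y hy
    · rw [mexp_of_nonneg _ _ hy]; exact hf₀pos y hy
  -- pointwise bound for product
  have hprod : ∀ x y : ℝ, ‖h (x - y) * f₀ y‖
      ≤ ℓ * C₀ * N * (mexp a b (x - y) * mexp A B y) := by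
    intro x y
    rw [norm_mul, Real.norm_eq_abs, Real.norm_eq_abs]
    calc |h (x - y)| * |f₀ y| ≤ (ℓ * C₀ * mexp a b (x - y)) * (N * mexp A B y) :=
        mul_le_mul (hh _) (hf _) (abs_nonneg _)
          (mul_nonneg (mul_nonneg hℓ.le hC₀pos.le) (mexp_pos a b (x - y)).le)
    _ = ℓ * C₀ * N * (mexp a b (x - y) * mexp A B y) := by ring
  have hmeasprod : ∀ x : ℝ, AEStronglyMeasurable (fun y => h (x - y) * f₀ y) volume := by
    intro x
    exact ((hmeas.comp (measurable_const.sub measurable_id)).mul hf₀meas).aestronglyMeasurable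
  have hint : ∀ x : ℝ, Integrable (fun y => h (x - y) * f₀ y) := by
    intro x
    refine Integrable.mono' (((conv_key hbA hbB hAa hBa x).1).const_mul (ℓ * C₀ * N))
      (hmeasprod x) (Filter.Eventually.of_forall fun y => ?_)
    exact hprod x y
  have hbnd : ∀ x : ℝ, |∫ y, h (x - y) * f₀ y| ≤ C₀ * C₁ * ℓ * N * mexp A B x := by
    intro x
    obtain ⟨hGint, hGbnd⟩ := conv_key hbA hbB hAa hBa x
    calc |∫ y, h (x - y) * f₀ y| = ‖∫ y, h (x - y) * f₀ y‖ := (Real.norm_eq_abs _).symm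
    _ ≤ ∫ y, ‖h (x - y) * f₀ y‖ := norm_integral_le_integral_norm _
    _ ≤ ∫ y, ℓ * C₀ * N * (mexp a b (x - y) * mexp A B y) := by
        refine integral_mono (hint x).norm (hGint.const_mul _) fun y => ?_
        exact hprod x y
    _ = ℓ * C₀ * N * ∫ y, mexp a b (x - y) * mexp A B y := integral_const_mul _ _
    _ ≤ ℓ * C₀ * N * (C₁ * mexp A B x) := by
        exact mul_le_mul_of_nonneg_left hGbnd
          (mul_pos (mul_pos hℓ hC₀pos) hN).le
    _ = C₀ * C₁ * ℓ * N * mexp A B x := by ring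
  refine ⟨hint, fun x hx => ?_, fun x hx => ?_⟩
  · have := hbnd x
    rwa [mexp_of_nonpos _ _ hx.le] at this
  · have := hbnd x
    rwa [mexp_of_nonneg _ _ hx] at this
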